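/- Let ψ_n and ψ_n' be two sequences of m×m stochastic matrices satisfying the same recursion ψ_{n+1} = (I - R_n - Q_n ψ_n)^{-1} P_n with arbitrary stochastic initial conditions ψ_1, ψ_1', where each triple (P_n, Q_n, R_n) consists of nonnegative matrices with (P_n+Q_n+R_n)·1 = 1 and satisfies: ‖R_n^l‖ ≤ 1-ε and all entries of (I-R_n)^{-1}P_n and (I-R_n)^{-1}Q_n are at least ε. Then there exist constants C₁ and 0 ≤ c₀ < 1, depending only on ε, l, m, such that ‖ψ_{n+1} - ψ_{n+1}'‖ ≤ 2C₁ c₀^n for all n. -/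

import Mathlib

open Matrix BigOperators

/-- The maximum absolute row-sum norm of a matrix. -/
noncomputable def rowNorm {m : ℕ} (A : Matrix (Fin m) (Fin m) ℝ) : ℝ :=
  ⨆ i, ∑ j, |A i j|

/-- A matrix is (row-)stochastic if its entries are nonnegative and each row
sums to `1`. -/
def IsStochastic {m : ℕ} (S : Matrix (Fin m) (Fin m) ℝ) : Prop :=
  (∀ i j, 0 ≤ S i j) ∧ ∀ i, ∑ j, S i j = 1

namespace Stmt16Aux

variable {m : ℕ}

abbrev M (m : ℕ) := Matrix (Fin m) (Fin m) ℝ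

/-- entrywise nonnegative -/
def Mnn (A : M m) : Prop := ∀ i j, 0 ≤ A i j

/-- all absolute row sums are at most `c` -/
def RowsLE (A : M m) (c : ℝ) : Prop := ∀ i, ∑ j, |A i j| ≤ c

lemma Mnn.mul {A B : M m} (hA : Mnn A) (hB : Mnn B) : Mnn (A * B) := by
  intro i j
  rw [Matrix.mul_apply]
  exact Finset.sum_nonneg fun k _ => mul_nonneg (hA i k) (hB k j)

lemma Mnn.pow {X : M m} (hX : Mnn X) : ∀ N, Mnn (X ^ N) := by
  intro N
  induction N with
  | zero =>
      intro i j
      rw [pow_zero, Matrix.one_apply]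
      split <;> norm_num
  | succ N ih => rw [pow_succ]; exact ih.mul hX

lemma row_sum_mul (A B : M m) (i : Fin m) :
    ∑ j, (A * B) i j = ∑ k, A i k * ∑ j, B k j := by
  simp only [Matrix.mul_apply, Finset.mul_sum]
  exact Finset.sum_comm

lemma RowsLE.mul {A B : M m} {c d : ℝ} (hA : RowsLE A c) (hB : RowsLE B d)
    (hd : 0 ≤ d) : RowsLE (A * B) (c * d) := by
  intro i
  calc ∑ j, |(A * B) i j| ≤ ∑ j, ∑ k, |A i k| * |B k j| := by
        refine Finset.sum_le_sum fun j _ => ?_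
        rw [Matrix.mul_apply]
        refine (Finset.abs_sum_le_sum_abs _ _).trans (le_of_eq ?_)
        simp [abs_mul]
    _ = ∑ k, |A i k| * ∑ j, |B k j| := by
        rw [Finset.sum_comm]; simp [Finset.mul_sum]
    _ ≤ ∑ k, |A i k| * d :=
        Finset.sum_le_sum fun k _ => mul_le_mul_of_nonneg_left (hB k) (abs_nonneg _)
    _ = (∑ k, |A i k|) * d := by rw [Finset.sum_mul]
    _ ≤ c * d := mul_le_mul_of_nonneg_right (hA i) hd

lemma RowsLE.pow {X : M m} {c : ℝ} (hm : 0 < m) (h : RowsLE X c) (hc : 0 ≤ c) :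
    ∀ N, RowsLE (X ^ N) (c ^ N) := by
  intro N
  induction N with
  | zero =>
      intro i
      simp only [pow_zero]
      have : ∀ j, |(1 : M m) i j| = if i = j then (1:ℝ) else 0 := by
        intro j; rw [Matrix.one_apply]; split <;> simp
      rw [Finset.sum_congr rfl fun j _ => this j]
      simp
  | succ N ih =>
      have := ih.mul h (by positivity)
      rwa [← pow_succ, ← pow_succ] at this

/-- a vector fixed by a matrix with absolute row sums `< 1` is zero -/
lemma fixed_zero (hm : 0 < m) {Y : M m} {c : ℝ} (hc : c < 1) (hY : RowsLE Y c)
    {v : Fin m → ℝ} (hv : Y *ᵥ v = v) : v = 0 := by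
  haveI : Nonempty (Fin m) := ⟨⟨0, hm⟩⟩
  obtain ⟨i0, -, hi0⟩ := Finset.exists_max_image Finset.univ (fun i => |v i|)
    ⟨⟨0, hm⟩, Finset.mem_univ _⟩
  have key : |v i0| ≤ c * |v i0| := by
    conv_lhs => rw [← hv]
    calc |(Y *ᵥ v) i0| = |∑ j, Y i0 j * v j| := by rfl
      _ ≤ ∑ j, |Y i0 j * v j| := Finset.abs_sum_le_sum_abs _ _
      _ = ∑ j, |Y i0 j| * |v j| := by simp [abs_mul]
      _ ≤ ∑ j, |Y i0 j| * |v i0| :=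
          Finset.sum_le_sum fun j _ =>
            mul_le_mul_of_nonneg_left (hi0 j (Finset.mem_univ _)) (abs_nonneg _)
      _ = (∑ j, |Y i0 j|) * |v i0| := by rw [Finset.sum_mul]
      _ ≤ c * |v i0| := mul_le_mul_of_nonneg_right (hY i0) (abs_nonneg _)
  have h0 : |v i0| ≤ 0 := by nlinarith [abs_nonneg (v i0)]
  funext i
  have := (hi0 i (Finset.mem_univ _)).trans h0
  simpa [abs_nonpos_iff] using this

lemma isUnit_of_mulVec_injective {A : M m} (h : ∀ v, A *ᵥ v = 0 → v = 0) :
    IsUnit A := by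
  rw [Matrix.isUnit_iff_isUnit_det, isUnit_iff_ne_zero]
  intro hdet
  obtain ⟨v, hv0, hv⟩ := Matrix.exists_mulVec_eq_zero_iff.mpr hdet
  exact hv0 (h v hv)

lemma isUnit_one_sub (hm : 0 < m) {X : M m} {c : ℝ} (hc : c < 1) (hX : RowsLE X c) :
    IsUnit (1 - X) := by
  refine isUnit_of_mulVec_injective fun v hv => ?_
  have : X *ᵥ v = v := by
    have := hv
    rw [Matrix.sub_mulVec, Matrix.one_mulVec, sub_eq_zero] at this
    exact this.symm
  exact fixed_zero hm hc hX this

lemma isUnit_one_sub_R (hm : 0 < m) {R : M m} {l : ℕ} {ε : ℝ} (hε : 0 < ε)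
    (hRl : RowsLE (R ^ l) (1 - ε)) : IsUnit (1 - R) := by
  refine isUnit_of_mulVec_injective fun v hv => ?_
  have hfix : R *ᵥ v = v := by
    rw [Matrix.sub_mulVec, Matrix.one_mulVec, sub_eq_zero] at hv
    exact hv.symm
  have hpow : ∀ N, R ^ N *ᵥ v = v := by
    intro N
    induction N with
    | zero => simp
    | succ N ih => rw [pow_succ, ← Matrix.mulVec_mulVec, hfix, ih]
  exact fixed_zero hm (by linarith) hRl (hpow l)

/-- the inverse of `1 - X` is entrywise nonnegative when `X` is nonnegative
with absolute row sums at most `c < 1`. -/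
lemma inv_one_sub_nonneg (hm : 0 < m) {X : M m} {c : ℝ} (hX : Mnn X)
    (hc0 : 0 ≤ c) (hc : c < 1) (hXc : RowsLE X c) :
    Mnn (1 - X)⁻¹ := by
  set K := (1 - X)⁻¹ with hK
  have hu := isUnit_one_sub hm hc hXc
  have hdet := (Matrix.isUnit_iff_isUnit_det _).mp hu
  have e2 : K * (1 - X) = 1 := Matrix.nonsing_inv_mul _ hdet
  have e1 : (1 - X) * K = 1 := Matrix.mul_nonsing_inv _ hdet
  have idK : K = 1 + X * K := by
    have h := e1
    rw [sub_mul, one_mul] at h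
    exact sub_eq_iff_eq_add.mp h
  have idK' : K = 1 + K * X := by
    have h := e2
    rw [mul_sub, mul_one] at h
    exact sub_eq_iff_eq_add.mp h
  have partial_sum : ∀ N : ℕ, K = (∑ k ∈ Finset.range N, X ^ k) + X ^ N * K := by
    intro N
    induction N with
    | zero => simp
    | succ N ih =>
        conv_lhs => rw [ih]
        rw [Finset.sum_range_succ]
        have : X ^ N * K = X ^ N + X ^ (N + 1) * K := by
          conv_lhs => rw [idK]
          rw [mul_add, mul_one, pow_succ, mul_assoc]
        rw [this]; abel
  set κ : ℝ := ∑ i, ∑ j, |K i j| with hκdef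
  have hκ0 : 0 ≤ κ := Finset.sum_nonneg fun i _ => Finset.sum_nonneg fun j _ => abs_nonneg _
  have hKrows : RowsLE K (κ + 1) := by
    intro i
    have : ∑ j, |K i j| ≤ κ :=
      Finset.single_le_sum (f := fun i => ∑ j, |K i j|)
        (fun i _ => Finset.sum_nonneg fun j _ => abs_nonneg _) (Finset.mem_univ i)
    linarith
  intro i j
  by_contra hneg
  push_neg at hneg
  obtain ⟨N, hN⟩ := exists_pow_lt_of_lt_one (x := -K i j / (κ + 1))
    (div_pos (by linarith) (by linarith)) hc
  have hsplit := partial_sum N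
  have hrows : RowsLE (X ^ N * K) (c ^ N * (κ + 1)) :=
    (RowsLE.pow hm hXc hc0 N).mul hKrows (by linarith)
  have hentry : |(X ^ N * K) i j| ≤ c ^ N * (κ + 1) := by
    refine le_trans ?_ (hrows i)
    exact Finset.single_le_sum (f := fun j => |(X ^ N * K) i j|)
      (fun j _ => abs_nonneg _) (Finset.mem_univ j)
  have hpartnn : 0 ≤ (∑ k ∈ Finset.range N, X ^ k) i j := by
    rw [Matrix.sum_apply]
    exact Finset.sum_nonneg fun k _ => hX.pow k i j
  have hKsplit : K i j = (∑ k ∈ Finset.range N, X ^ k) i j + (X ^ N * K) i j := by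
    conv_lhs => rw [hsplit]
    rw [Matrix.add_apply]
  have h1 : -(c ^ N * (κ + 1)) ≤ (X ^ N * K) i j := (abs_le.mp hentry).1
  have h2 : c ^ N * (κ + 1) < -K i j := (lt_div_iff₀ (by linarith)).mp hN
  linarith


lemma sum_one_row (i : Fin m) : ∑ j, (1 : M m) i j = 1 := by
  simp [Matrix.one_apply]

lemma stepMaster (hm : 0 < m) {l : ℕ} {ε : ℝ} (hε : 0 < ε)
    {P Q R : M m}
    (hP : ∀ i j, 0 ≤ P i j) (hQ : ∀ i j, 0 ≤ Q i j) (hR : ∀ i j, 0 ≤ R i j)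
    (hrows : ∀ i, ∑ j, (P i j + Q i j + R i j) = 1)
    (hRl : RowsLE (R ^ l) (1 - ε))
    (hH : ∀ i j, ε ≤ ((1 - R)⁻¹ * P) i j)
    (hG : ∀ i j, ε ≤ ((1 - R)⁻¹ * Q) i j)
    {C : M m} (hC : Mnn C) (hC1 : ∀ i, ∑ j, C i j ≤ 1) :
    IsUnit (1 - R - Q * C) ∧
    Mnn ((1 - R - Q * C)⁻¹ * Q) ∧
    Mnn ((1 - R - Q * C)⁻¹ * P) ∧
    (∀ i j, ε ≤ ((1 - R - Q * C)⁻¹ * P) i j) ∧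
    (∀ i, ∑ j, ((1 - R - Q * C)⁻¹ * P) i j ≤ 1) ∧
    ε * (2 * m) ≤ 1 := by
  haveI : Nonempty (Fin m) := ⟨⟨0, hm⟩⟩
  have hRunit : IsUnit (1 - R) := isUnit_one_sub_R hm hε hRl
  have hRdet := (Matrix.isUnit_iff_isUnit_det _).mp hRunit
  have eR1 : (1 - R) * (1 - R)⁻¹ = 1 := Matrix.mul_nonsing_inv _ hRdet
  have eR2 : (1 - R)⁻¹ * (1 - R) = 1 := Matrix.nonsing_inv_mul _ hRdet
  set H := (1 - R)⁻¹ * P with hHdef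
  set G := (1 - R)⁻¹ * Q with hGdef
  have hRH : (1 - R) * H = P := by rw [hHdef, ← Matrix.mul_assoc, eR1, Matrix.one_mul]
  have hRG : (1 - R) * G = Q := by rw [hGdef, ← Matrix.mul_assoc, eR1, Matrix.one_mul]
  have MnnH : Mnn H := fun i j => le_trans (le_of_lt hε) (hH i j)
  have MnnG : Mnn G := fun i j => le_trans (le_of_lt hε) (hG i j)
  -- injectivity of (1 - R)
  have hinj : ∀ v : Fin m → ℝ, (1 - R) *ᵥ v = 0 → v = 0 := by
    intro v hv
    have hfix : R *ᵥ v = v := by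
      rw [Matrix.sub_mulVec, Matrix.one_mulVec, sub_eq_zero] at hv
      exact hv.symm
    have hpow : ∀ N, R ^ N *ᵥ v = v := by
      intro N
      induction N with
      | zero => simp
      | succ N ih => rw [pow_succ, ← Matrix.mulVec_mulVec, hfix, ih]
    exact fixed_zero hm (by linarith) hRl (hpow l)
  -- row sums of H and G add to one
  have key : ∀ i, (∑ j, H i j) + (∑ j, G i j) = 1 := by
    set f : Fin m → ℝ := fun k => ((∑ j, H k j) + (∑ j, G k j)) - 1 with hf
    have hker : (1 - R) *ᵥ f = 0 := by
      funext i
      have hmv : ((1 - R) *ᵥ f) i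
          = (∑ j, ((1 - R) * H) i j) + (∑ j, ((1 - R) * G) i j)
            - ∑ k, (1 - R) i k := by
        show ∑ k, (1 - R) i k * f k = _
        rw [row_sum_mul, row_sum_mul, ← Finset.sum_add_distrib, ← Finset.sum_sub_distrib]
        refine Finset.sum_congr rfl fun k _ => ?_
        simp only [hf]
        ring
      have hone : ∑ k, (1 - R) i k = 1 - ∑ k, R i k := by
        simp only [Matrix.sub_apply]
        rw [Finset.sum_sub_distrib, sum_one_row]
      have hr := hrows i
      rw [Finset.sum_add_distrib, Finset.sum_add_distrib] at hr
      rw [hmv, hRH, hRG, hone]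
      simp only [Pi.zero_apply]
      linarith
    intro i
    have := congrFun (hinj f hker) i
    simp only [hf, Pi.zero_apply] at this
    linarith
  -- ε * 2m ≤ 1
  have hsumH : ∀ i, (m : ℝ) * ε ≤ ∑ j, H i j := by
    intro i
    calc (m : ℝ) * ε = ∑ _j : Fin m, ε := by
          rw [Finset.sum_const, Finset.card_univ, Fintype.card_fin, nsmul_eq_mul]
      _ ≤ ∑ j, H i j := Finset.sum_le_sum fun j _ => hH i j
  have hsumG : ∀ i, (m : ℝ) * ε ≤ ∑ j, G i j := by
    intro i
    calc (m : ℝ) * ε = ∑ _j : Fin m, ε := by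
          rw [Finset.sum_const, Finset.card_univ, Fintype.card_fin, nsmul_eq_mul]
      _ ≤ ∑ j, G i j := Finset.sum_le_sum fun j _ => hG i j
  have hεm : ε * (2 * m) ≤ 1 := by
    have h1 := hsumH ⟨0, hm⟩
    have h2 := hsumG ⟨0, hm⟩
    have h3 := key ⟨0, hm⟩
    nlinarith
  have hGrows : ∀ i, ∑ j, G i j ≤ 1 - m * ε := by
    intro i
    have := hsumH i
    have := key i
    linarith
  -- the matrix X = G * C
  set X := G * C with hXdef
  have MnnX : Mnn X := MnnG.mul hC
  have hXleG : ∀ t, ∑ j, X t j ≤ ∑ j, G t j := by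
    intro t
    rw [hXdef, row_sum_mul]
    refine Finset.sum_le_sum fun k _ => ?_
    calc G t k * ∑ j, C k j ≤ G t k * 1 :=
          mul_le_mul_of_nonneg_left (hC1 k) (MnnG t k)
      _ = G t k := mul_one _
  have hXrows' : ∀ i, ∑ j, X i j ≤ 1 - m * ε := fun i => (hXleG i).trans (hGrows i)
  have hmR : (0:ℝ) < m := by exact_mod_cast hm
  have hc0 : (0:ℝ) ≤ 1 - m * ε := by nlinarith
  have hc1 : (1:ℝ) - m * ε < 1 := by nlinarith
  have hXrows : RowsLE X (1 - m * ε) := by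
    intro i
    calc ∑ j, |X i j| = ∑ j, X i j :=
          Finset.sum_congr rfl fun j _ => abs_of_nonneg (MnnX i j)
      _ ≤ 1 - m * ε := hXrows' i
  have hXunit : IsUnit (1 - X) := isUnit_one_sub hm hc1 hXrows
  have hXdet := (Matrix.isUnit_iff_isUnit_det _).mp hXunit
  set K := (1 - X)⁻¹ with hKdef
  have eX1 : (1 - X) * K = 1 := Matrix.mul_nonsing_inv _ hXdet
  have eX2 : K * (1 - X) = 1 := Matrix.nonsing_inv_mul _ hXdet
  have MnnK : Mnn K := inv_one_sub_nonneg hm MnnX hc0 hc1 hXrows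
  have idK : K = 1 + X * K := by
    have h := eX1
    rw [sub_mul, one_mul] at h
    exact sub_eq_iff_eq_add.mp h
  have idK' : K = 1 + K * X := by
    have h := eX2
    rw [mul_sub, mul_one] at h
    exact sub_eq_iff_eq_add.mp h
  -- factorization
  have factor : 1 - R - Q * C = (1 - R) * (1 - X) := by
    rw [mul_sub, mul_one, hXdef, ← Matrix.mul_assoc, hRG]
  have hAunit : IsUnit (1 - R - Q * C) := by
    rw [factor]; exact hRunit.mul hXunit
  have hAdet := (Matrix.isUnit_iff_isUnit_det _).mp hAunit
  have eA2 : (1 - R - Q * C)⁻¹ * (1 - R - Q * C) = 1 := Matrix.nonsing_inv_mul _ hAdet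
  have hAinv : ∀ Y Z : M m, (1 - R - Q * C) * Z = Y → (1 - R - Q * C)⁻¹ * Y = Z := by
    intro Y Z h
    rw [← h, ← Matrix.mul_assoc, eA2, Matrix.one_mul]
  have hAQ : (1 - R - Q * C)⁻¹ * Q = K * G := by
    refine hAinv _ _ ?_
    rw [factor, Matrix.mul_assoc, ← Matrix.mul_assoc (1 - X) K G, eX1, Matrix.one_mul, hRG]
  have hAP : (1 - R - Q * C)⁻¹ * P = K * H := by
    refine hAinv _ _ ?_
    rw [factor, Matrix.mul_assoc, ← Matrix.mul_assoc (1 - X) K H, eX1, Matrix.one_mul, hRH]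
  have expandKH : K * H = H + X * (K * H) := by
    conv_lhs => rw [idK]
    rw [add_mul, one_mul, Matrix.mul_assoc]
  have T4 : ∀ i j, ε ≤ (K * H) i j := by
    intro i j
    have h := congrFun (congrFun expandKH i) j
    have hnn : 0 ≤ (X * (K * H)) i j := (MnnX.mul (MnnK.mul MnnH)) i j
    have := hH i j
    rw [h, Matrix.add_apply]
    linarith
  have T5 : ∀ i, ∑ j, (K * H) i j ≤ 1 := by
    intro i
    have s1 : ∑ j, (K * H) i j = (∑ k, K i k) - ∑ j, (K * G) i j := by
      rw [row_sum_mul, row_sum_mul]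
      rw [← Finset.sum_sub_distrib]
      refine Finset.sum_congr rfl fun k _ => ?_
      have := key k
      nlinarith [MnnK i k]
    have s2 : ∑ k, K i k = 1 + ∑ j, (K * X) i j := by
      conv_lhs => rw [idK']
      simp only [Matrix.add_apply]
      rw [Finset.sum_add_distrib, sum_one_row]
    have s3 : ∑ j, (K * X) i j ≤ ∑ j, (K * G) i j := by
      rw [row_sum_mul, row_sum_mul]
      exact Finset.sum_le_sum fun t _ =>
        mul_le_mul_of_nonneg_left (hXleG t) (MnnK i t)
    linarith
  refine ⟨hAunit, ?_, ?_, ?_, ?_, hεm⟩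
  · rw [hAQ]; exact MnnK.mul MnnG
  · rw [hAP]; exact MnnK.mul MnnH
  · rw [hAP]; exact T4
  · rw [hAP]; exact T5


/-- invariant for products of positive sub-stochastic matrices: all rows are
within a multiplicative window of width `w` around multiples of row `i0`. -/
def Inv (i0 : Fin m) (ε : ℝ) (A : M m) (w : ℝ) : Prop :=
  (∀ i j j', ε * A i j' ≤ A i j) ∧ (∀ j, 0 < A i0 j) ∧
  ∃ L U : Fin m → ℝ,
    (∀ i, ε ≤ L i) ∧ (∀ i, U i - L i ≤ w) ∧
    (∀ i j, L i * A i0 j ≤ A i j ∧ A i j ≤ U i * A i0 j)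

lemma Inv_base (hm : 0 < m) (i0 : Fin m) {ε : ℝ} (hε : 0 < ε) {S : M m}
    (hS : ∀ i j, ε ≤ S i j ∧ S i j ≤ 1) : Inv i0 ε S (1 / ε) := by
  refine ⟨?_, ?_, fun _ => ε, fun _ => 1 / ε, fun _ => le_refl _, ?_, ?_⟩
  · intro i j j'
    calc ε * S i j' ≤ ε * 1 := by nlinarith [(hS i j').2, hε.le]
      _ = ε := mul_one _
      _ ≤ S i j := (hS i j).1
  · intro j; exact lt_of_lt_of_le hε (hS i0 j).1
  · intro i
    have : ε * ε ≤ 1 := by nlinarith [(hS i0 i).1, (hS i0 i).2]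
    rw [div_sub' (ne_of_gt hε), div_le_div_iff₀ hε hε]
    nlinarith
  · intro i j
    constructor
    · calc ε * S i0 j ≤ ε * 1 := by nlinarith [(hS i0 j).2, hε.le]
        _ = ε := mul_one _
        _ ≤ S i j := (hS i j).1
    · calc S i j ≤ 1 := (hS i j).2
        _ = (1/ε) * ε := by field_simp
        _ ≤ (1/ε) * S i0 j := by
            have h1 : 0 ≤ 1/ε := by positivity
            nlinarith [(hS i0 j).1]

lemma Inv_step (hm : 0 < m) (i0 : Fin m) {ε δ w : ℝ} (hε : 0 < ε)
    (hδ0 : 0 ≤ δ) (hδ1 : δ ≤ 1) (hδm : δ * m ≤ ε ^ 2)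
    {A S : M m} (hS : ∀ i j, ε ≤ S i j ∧ S i j ≤ 1)
    (hA : Inv i0 ε A w) (hw : 0 ≤ w) :
    Inv i0 ε (A * S) ((1 - δ) * w) := by
  haveI : Nonempty (Fin m) := ⟨i0⟩
  obtain ⟨hosc, hpos, L, U, hLε, hgap, hbnd⟩ := hA
  have hApos : ∀ i t, 0 < A i t := fun i t =>
    lt_of_lt_of_le (mul_pos (lt_of_lt_of_le hε (hLε i)) (hpos t)) (hbnd i t).1
  set r : Fin m → Fin m → ℝ := fun i t => A i t / A i0 t with hr
  have hrL : ∀ i t, L i ≤ r i t := fun i t => (le_div_iff₀ (hpos t)).mpr (hbnd i t).1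
  have hrU : ∀ i t, r i t ≤ U i := fun i t => (div_le_iff₀ (hpos t)).mpr (hbnd i t).2
  have hAr : ∀ i t, A i t = r i t * A i0 t := fun i t =>
    (div_mul_cancel₀ _ (ne_of_gt (hpos t))).symm
  have hmin : ∀ i : Fin m, ∃ t0, ∀ t, r i (t0 : Fin m) ≤ r i t := by
    intro i
    obtain ⟨t0, -, ht0⟩ := Finset.exists_min_image Finset.univ (r i) ⟨i0, Finset.mem_univ _⟩
    exact ⟨t0, fun t => ht0 t (Finset.mem_univ _)⟩
  have hmax : ∀ i : Fin m, ∃ t1, ∀ t, r i t ≤ r i (t1 : Fin m) := by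
    intro i
    obtain ⟨t1, -, ht1⟩ := Finset.exists_max_image Finset.univ (r i) ⟨i0, Finset.mem_univ _⟩
    exact ⟨t1, fun t => ht1 t (Finset.mem_univ _)⟩
  choose t0 ht0 using hmin
  choose t1 ht1 using hmax
  -- weights: total mass D and the mass at a single point
  have hDle : ∀ i (t' : Fin m) j, (A * S) i j ≤ (m : ℝ) * A i (t') / ε := by
    intro i t' j
    rw [Matrix.mul_apply]
    calc ∑ t, A i t * S t j ≤ ∑ t, A i (t') / ε := by
          refine Finset.sum_le_sum fun t _ => ?_
          have h1 : A i t * S t j ≤ A i t := by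
            nlinarith [(hS t j).2, (hApos i t).le, (hS t j).1, hε]
          have h2 : A i t ≤ A i (t') / ε := by
            rw [le_div_iff₀ hε]
            calc A i t * ε = ε * A i t := mul_comm _ _
              _ ≤ A i (t') := hosc i t' t
          linarith
      _ = (m : ℝ) * A i (t') / ε := by
          rw [Finset.sum_const, Finset.card_univ, Fintype.card_fin, nsmul_eq_mul]
          ring
  have hWlb : ∀ (t' : Fin m) j, δ * (A * S) i0 j ≤ A i0 t' * S t' j := by
    intro t' j
    have h1 : (A * S) i0 j ≤ (m : ℝ) * A i0 t' / ε := hDle i0 t' j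
    have h2 : ε * A i0 t' ≤ A i0 t' * S t' j := by
      nlinarith [(hS t' j).1, (hApos i0 t').le]
    have h3 : δ * ((m : ℝ) * A i0 t' / ε) ≤ ε * A i0 t' := by
      have hkey : δ * ((m : ℝ) * A i0 t') ≤ ε ^ 2 * A i0 t' := by
        nlinarith [(hApos i0 t').le]
      calc δ * ((m : ℝ) * A i0 t' / ε) = δ * ((m : ℝ) * A i0 t') / ε := by ring
        _ ≤ ε ^ 2 * A i0 t' / ε := by gcongr
        _ = ε * A i0 t' := by field_simp
    calc δ * (A * S) i0 j ≤ δ * ((m : ℝ) * A i0 t' / ε) :=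
          mul_le_mul_of_nonneg_left h1 hδ0
      _ ≤ ε * A i0 t' := h3
      _ ≤ A i0 t' * S t' j := h2
  -- the new lower/upper envelopes
  set L' : Fin m → ℝ := fun i => L i + δ * (r i (t1 i) - L i) with hL'
  set U' : Fin m → ℝ := fun i => U i - δ * (U i - r i (t0 i)) with hU'
  have hSpos : ∀ t j, 0 < S t j := fun t j => lt_of_lt_of_le hε (hS t j).1
  have hWnn : ∀ t j, 0 ≤ A i0 t * S t j := fun t j =>
    mul_nonneg (hApos i0 t).le (hSpos t j).le
  have hASapp : ∀ i j, (A * S) i j = ∑ t, r i t * (A i0 t * S t j) := by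
    intro i j
    rw [Matrix.mul_apply]
    refine Finset.sum_congr rfl fun t _ => ?_
    rw [hAr i t]; ring
  refine ⟨?_, ?_, L', U', ?_, ?_, ?_⟩
  · -- oscillation within rows
    intro i j j'
    have h1 : (A * S) i j' ≤ ∑ t, A i t := by
      rw [Matrix.mul_apply]
      refine Finset.sum_le_sum fun t _ => ?_
      nlinarith [(hS t j').2, (hApos i t).le]
    have h2 : ε * ∑ t, A i t ≤ (A * S) i j := by
      rw [Matrix.mul_apply, Finset.mul_sum]
      refine Finset.sum_le_sum fun t _ => ?_
      nlinarith [(hS t j).1, (hApos i t).le]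
    nlinarith
  · -- positivity of the reference row
    intro j
    rw [Matrix.mul_apply]
    exact Finset.sum_pos (fun t _ => mul_pos (hApos i0 t) (hSpos t j))
      Finset.univ_nonempty
  · -- ε ≤ L'
    intro i
    have := hrL i (t1 i)
    simp only [hL']
    nlinarith [hLε i]
  · -- gap contraction
    intro i
    simp only [hL', hU']
    have h1 := ht0 i (t1 i)
    have h2 := hrL i (t1 i)
    have h3 := hrU i (t0 i)
    have h4 := hgap i
    nlinarith
  · -- the window bounds
    intro i j
    set D := (A * S) i0 j with hD
    have hDW : D = ∑ t, A i0 t * S t j := by rw [hD, Matrix.mul_apply]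
    have hDpos : 0 < D := by
      rw [hDW]
      exact Finset.sum_pos (fun t _ => mul_pos (hApos i0 t) (hSpos t j))
        Finset.univ_nonempty
    constructor
    · -- lower bound, using the maximizing index t1
      have hsplit : (A * S) i j
          = r i (t1 i) * (A i0 (t1 i) * S (t1 i) j)
            + ∑ t ∈ Finset.univ.erase (t1 i), r i t * (A i0 t * S t j) := by
        rw [hASapp i j, ← Finset.add_sum_erase _ _ (Finset.mem_univ (t1 i))]
      have hWsum : ∑ t ∈ Finset.univ.erase (t1 i), A i0 t * S t j
          = D - A i0 (t1 i) * S (t1 i) j := by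
        rw [Finset.sum_erase_eq_sub (Finset.mem_univ (t1 i)), ← hDW]
      have herase : ∑ t ∈ Finset.univ.erase (t1 i), r i t * (A i0 t * S t j)
          ≥ L i * (D - A i0 (t1 i) * S (t1 i) j) := by
        have h := Finset.sum_le_sum (s := Finset.univ.erase (t1 i))
          (f := fun t => L i * (A i0 t * S t j)) (g := fun t => r i t * (A i0 t * S t j))
          (fun t _ => mul_le_mul_of_nonneg_right (hrL i t) (hWnn t j))
        rw [← Finset.mul_sum, hWsum] at h
        exact h
      have hWt1 := hWlb (t1 i) j
      have h2 := hrL i (t1 i)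
      -- (A*S) i j ≥ L i * D + (r i (t1 i) - L i) * W ≥ L i * D + (r - L) δ D = L' D
      simp only [hL']
      nlinarith [hWnn (t1 i) j, hDpos.le]
    · -- upper bound, using the minimizing index t0
      have hsplit : (A * S) i j
          = r i (t0 i) * (A i0 (t0 i) * S (t0 i) j)
            + ∑ t ∈ Finset.univ.erase (t0 i), r i t * (A i0 t * S t j) := by
        rw [hASapp i j, ← Finset.add_sum_erase _ _ (Finset.mem_univ (t0 i))]
      have hWsum : ∑ t ∈ Finset.univ.erase (t0 i), A i0 t * S t j
          = D - A i0 (t0 i) * S (t0 i) j := by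
        rw [Finset.sum_erase_eq_sub (Finset.mem_univ (t0 i)), ← hDW]
      have herase : ∑ t ∈ Finset.univ.erase (t0 i), r i t * (A i0 t * S t j)
          ≤ U i * (D - A i0 (t0 i) * S (t0 i) j) := by
        have h := Finset.sum_le_sum (s := Finset.univ.erase (t0 i))
          (f := fun t => r i t * (A i0 t * S t j)) (g := fun t => U i * (A i0 t * S t j))
          (fun t _ => mul_le_mul_of_nonneg_right (hrU i t) (hWnn t j))
        rw [← Finset.mul_sum, hWsum] at h
        exact h
      have hWt0 := hWlb (t0 i) j
      have h3 := hrU i (t0 i)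
      simp only [hU']
      nlinarith [hWnn (t0 i) j, hDpos.le]


/-- The key estimate: if `Ψ - Φn = Nn * Pi` with `Nn` nonnegative and `Pi`
satisfying the window invariant, then each entry of `Ψ - Φn` is within `w/ε`
of a quantity not depending on `Ψ` or `Nn`. -/
lemma final_est (hm : 0 < m) (i0 : Fin m) {ε w : ℝ} (hε : 0 < ε) (hw : 0 ≤ w)
    {Ψ Φn Nn Pi : M m}
    (hΨ0 : ∀ i j, 0 ≤ Ψ i j) (hΨ1 : ∀ i, ∑ j, Ψ i j = 1)
    (hΦ0 : Mnn Φn)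
    (hid : Ψ - Φn = Nn * Pi) (hN : Mnn Nn)
    (hInv : Inv i0 ε Pi w) :
    ∀ i j, |(Ψ i j - Φn i j)
      - (1 - ∑ j', Φn i j') * (Pi i0 j / ∑ j', Pi i0 j')| ≤ w / ε := by
  haveI : Nonempty (Fin m) := ⟨i0⟩
  obtain ⟨hosc, hpos, L, U, hLε, hgap, hbnd⟩ := hInv
  set σ := ∑ j', Pi i0 j' with hσ
  have hσpos : 0 < σ := Finset.sum_pos (fun j _ => hpos j) Finset.univ_nonempty
  have hΔ : ∀ i j, Ψ i j - Φn i j = ∑ c, Nn i c * Pi c j := by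
    intro i j
    have := congrFun (congrFun hid i) j
    rwa [Matrix.sub_apply, Matrix.mul_apply] at this
  intro i j
  set a := ∑ c, Nn i c * L c with ha
  set b := ∑ c, Nn i c * U c with hb
  set T := ∑ c, Nn i c with hT
  have hTnn : 0 ≤ T := Finset.sum_nonneg fun c _ => hN i c
  have h1 : ∀ j', a * Pi i0 j' ≤ Ψ i j' - Φn i j' := by
    intro j'
    rw [hΔ i j', ha, Finset.sum_mul]
    refine Finset.sum_le_sum fun c _ => ?_
    rw [mul_assoc]
    exact mul_le_mul_of_nonneg_left (hbnd c j').1 (hN i c)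
  have h2 : ∀ j', Ψ i j' - Φn i j' ≤ b * Pi i0 j' := by
    intro j'
    rw [hΔ i j', hb, Finset.sum_mul]
    refine Finset.sum_le_sum fun c _ => ?_
    rw [mul_assoc]
    exact mul_le_mul_of_nonneg_left (hbnd c j').2 (hN i c)
  set g := 1 - ∑ j', Φn i j' with hg
  have hgsum : g = ∑ j', (Ψ i j' - Φn i j') := by
    rw [hg, Finset.sum_sub_distrib, hΨ1 i]
  have h3a : a * σ ≤ g := by
    rw [hgsum, hσ, Finset.mul_sum]
    exact Finset.sum_le_sum fun j' _ => h1 j'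
  have h3b : g ≤ b * σ := by
    rw [hgsum, hσ, Finset.mul_sum]
    exact Finset.sum_le_sum fun j' _ => h2 j'
  have h4 : b - a ≤ w * T := by
    rw [ha, hb, hT, ← Finset.sum_sub_distrib, Finset.mul_sum]
    refine Finset.sum_le_sum fun c _ => ?_
    have := hgap c
    have := hN i c
    nlinarith
  have h5 : ε * T ≤ a := by
    rw [ha, hT, Finset.mul_sum]
    refine Finset.sum_le_sum fun c _ => ?_
    have := hLε c
    have := hN i c
    nlinarith
  have h6 : Ψ i j - Φn i j ≤ 1 := by
    have hle : Ψ i j ≤ ∑ j', Ψ i j' :=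
      Finset.single_le_sum (f := fun j' => Ψ i j') (fun j' _ => hΨ0 i j') (Finset.mem_univ j)
    have := hΦ0 i j
    rw [hΨ1 i] at hle
    linarith
  have hPij : 0 < Pi i0 j := hpos j
  have hT6 : T * Pi i0 j ≤ 1 / ε := by
    have hh1 := h1 j
    rw [le_div_iff₀ hε]
    nlinarith [hPij.le]
  set x := Pi i0 j with hx
  set q := x / σ with hqdef
  have hq : q * σ = x := div_mul_cancel₀ _ (ne_of_gt hσpos)
  have hq0 : 0 ≤ q := div_nonneg hPij.le hσpos.le
  have hax : a * σ * q = a * x := by rw [mul_assoc, mul_comm σ q, hq]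
  have hbx : b * σ * q = b * x := by rw [mul_assoc, mul_comm σ q, hq]
  have hgq1 : a * x ≤ g * q := by
    have := mul_le_mul_of_nonneg_right h3a hq0
    linarith
  have hgq2 : g * q ≤ b * x := by
    have := mul_le_mul_of_nonneg_right h3b hq0
    linarith
  have hbax : b * x - a * x ≤ w / ε := by
    have e1 : (b - a) * x ≤ (w * T) * x := mul_le_mul_of_nonneg_right h4 hPij.le
    have e2 : w * (T * x) ≤ w * (1 / ε) := mul_le_mul_of_nonneg_left hT6 hw
    have e3 : w * (1 / ε) = w / ε := by ring
    nlinarith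
  have hl := h1 j
  have hr := h2 j
  rw [← hx] at hl hr
  rw [abs_le]
  clear_value σ a b T g x q
  constructor
  · linarith
  · linarith

/-- pure algebra for the difference of two solutions of the same step -/
lemma diff_alg {P Q R C C' : M m}
    (hU : IsUnit (1 - R - Q * C)) (hU' : IsUnit (1 - R - Q * C')) :
    (1 - R - Q * C)⁻¹ * P - (1 - R - Q * C')⁻¹ * P
      = ((1 - R - Q * C)⁻¹ * Q) * (C - C') * ((1 - R - Q * C')⁻¹ * P) := by
  set A := 1 - R - Q * C with hA
  set A' := 1 - R - Q * C' with hA'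
  have hd := (Matrix.isUnit_iff_isUnit_det _).mp hU
  have hd' := (Matrix.isUnit_iff_isUnit_det _).mp hU'
  have e1 : A⁻¹ * A = 1 := Matrix.nonsing_inv_mul _ hd
  have e2 : A' * A'⁻¹ = 1 := Matrix.mul_nonsing_inv _ hd'
  have hQC : Q * (C - C') = A' - A := by
    rw [hA, hA', Matrix.mul_sub]
    abel
  calc A⁻¹ * P - A'⁻¹ * P
      = A⁻¹ * ((A' - A) * (A'⁻¹ * P)) := by
        rw [Matrix.sub_mul, Matrix.mul_sub, ← Matrix.mul_assoc A' A'⁻¹ P, e2,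
          Matrix.one_mul, ← Matrix.mul_assoc A⁻¹ A (A'⁻¹ * P), e1, Matrix.one_mul]
    _ = ((1 - R - Q * C)⁻¹ * Q) * (C - C') * ((1 - R - Q * C')⁻¹ * P) := by
        rw [← hA, ← hA', ← hQC, Matrix.mul_assoc, Matrix.mul_assoc]
        exact (Matrix.mul_assoc _ _ _).symm


/-- the auxiliary solution starting from `0` at time `1` -/
noncomputable def phiSeq (P Q R : ℕ → M m) : ℕ → M m
  | 0 => 0
  | n + 1 => if n = 0 then 0 else (1 - R n - Q n * phiSeq P Q R n)⁻¹ * P n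

noncomputable def BB (Q R ψ : ℕ → M m) (n : ℕ) : M m :=
  (1 - R n - Q n * ψ n)⁻¹ * Q n

noncomputable def NSeq (Q R ψ : ℕ → M m) : ℕ → M m
  | 0 => BB Q R ψ 1 * ψ 1
  | k + 1 => BB Q R ψ (k + 2) * NSeq Q R ψ k

noncomputable def PiSeq (P Q R : ℕ → M m) : ℕ → M m
  | 0 => phiSeq P Q R 2
  | k + 1 => PiSeq P Q R k * phiSeq P Q R (k + 3)

end Stmt16Aux


open Stmt16Aux in
/-- Two solutions of the recursion `ψ_{n+1} = (I - R_n - Q_n ψ_n)⁻¹ P_n` with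
arbitrary stochastic initial conditions approach each other exponentially
fast, with constants depending only on `ε`, `l` and `m`. -/
theorem stmt_16 (m l : ℕ) (hm : 0 < m) (hl : 1 ≤ l) (ε : ℝ) (hε : 0 < ε) :
    ∃ (C₁ c₀ : ℝ), 0 < C₁ ∧ 0 ≤ c₀ ∧ c₀ < 1 ∧
      ∀ (P Q R : ℕ → Matrix (Fin m) (Fin m) ℝ)
        (ψ ψ' : ℕ → Matrix (Fin m) (Fin m) ℝ),
        (∀ n, (∀ i j, 0 ≤ P n i j) ∧ (∀ i j, 0 ≤ Q n i j) ∧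
          (∀ i j, 0 ≤ R n i j) ∧
          (∀ i, ∑ j, (P n i j + Q n i j + R n i j) = 1) ∧
          rowNorm (R n ^ l) ≤ 1 - ε ∧
          (∀ i j, ε ≤ ((1 - R n)⁻¹ * P n) i j) ∧
          (∀ i j, ε ≤ ((1 - R n)⁻¹ * Q n) i j)) →
        (∀ n, IsStochastic (ψ n) ∧ IsStochastic (ψ' n)) →
        (∀ n, 1 ≤ n → ψ (n + 1) = (1 - R n - Q n * ψ n)⁻¹ * P n) →
        (∀ n, 1 ≤ n → ψ' (n + 1) = (1 - R n - Q n * ψ' n)⁻¹ * P n) →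
        ∀ n, 1 ≤ n → rowNorm (ψ (n + 1) - ψ' (n + 1)) ≤ 2 * C₁ * c₀ ^ n := by
  classical
  haveI : Nonempty (Fin m) := ⟨⟨0, hm⟩⟩
  have hmR : (0:ℝ) < m := by exact_mod_cast hm
  set i0 : Fin m := ⟨0, hm⟩ with hi0
  refine ⟨2 * m / ε ^ 2, max 0 (1 - ε ^ 2 / m), by positivity, le_max_left _ _, ?_, ?_⟩
  · apply max_lt one_pos
    have : 0 < ε ^ 2 / m := by positivity
    linarith
  intro P Q R ψ ψ' hPQR hstoch hrec hrec' n hn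
  -- row-sum form of the `R ^ l` hypothesis
  have hRl : ∀ k, RowsLE (R k ^ l) (1 - ε) := by
    intro k i
    refine le_trans ?_ (hPQR k).2.2.2.2.1
    exact le_ciSup (f := fun i => ∑ j, |(R k ^ l) i j|)
      (Set.Finite.bddAbove (Set.finite_range _)) i
  -- the master step lemma specialized to index k
  have master : ∀ (k : ℕ) (C : M m), Mnn C → (∀ i, ∑ j, C i j ≤ 1) →
      IsUnit (1 - R k - Q k * C) ∧
      Mnn ((1 - R k - Q k * C)⁻¹ * Q k) ∧
      Mnn ((1 - R k - Q k * C)⁻¹ * P k) ∧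
      (∀ i j, ε ≤ ((1 - R k - Q k * C)⁻¹ * P k) i j) ∧
      (∀ i, ∑ j, ((1 - R k - Q k * C)⁻¹ * P k) i j ≤ 1) ∧
      ε * (2 * m) ≤ 1 := by
    intro k C hC hC1
    exact stepMaster hm hε (hPQR k).1 (hPQR k).2.1 (hPQR k).2.2.1 (hPQR k).2.2.2.1
      (hRl k) (hPQR k).2.2.2.2.2.1 (hPQR k).2.2.2.2.2.2 hC hC1
  have h0nn : Mnn (0 : M m) := fun i j => le_refl 0
  have h0rows : ∀ i, ∑ j, (0 : M m) i j ≤ 1 := by intro i; simp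
  have hεm : ε * (2 * m) ≤ 1 := (master 0 0 h0nn h0rows).2.2.2.2.2
  set δ : ℝ := ε ^ 2 / m with hδdef
  have hδ0 : 0 ≤ δ := by positivity
  have hδm : δ * m ≤ ε ^ 2 := le_of_eq (div_mul_cancel₀ _ (ne_of_gt hmR))
  have hm1R : (1:ℝ) ≤ m := by exact_mod_cast hm
  have hδ14 : δ ≤ 1 / 4 := by
    rw [hδdef, div_le_iff₀ hmR]
    nlinarith [sq_nonneg (1 - ε * (2 * m)), sq_nonneg ε, hε.le,
      mul_nonneg (sq_nonneg ε) (sub_nonneg.mpr hm1R)]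
  have hδ1 : δ ≤ 1 := by linarith
  have hc0eq : max 0 (1 - ε ^ 2 / m) = 1 - δ := max_eq_right (by rw [← hδdef]; linarith)
  -- the auxiliary solution φ
  set φ : ℕ → M m := phiSeq P Q R with hφ
  have φ0 : φ 1 = 0 := by rw [hφ]; simp [phiSeq]
  have φrec : ∀ k, 1 ≤ k → φ (k + 1) = (1 - R k - Q k * φ k)⁻¹ * P k := by
    intro k hk
    have hk0 : ¬ (k = 0) := by omega
    rw [hφ]
    conv_lhs => rw [phiSeq]
    rw [if_neg hk0]
  have φprops : ∀ k, 1 ≤ k → Mnn (φ k) ∧ (∀ i, ∑ j, φ k i j ≤ 1) := by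
    intro k hk
    induction k, hk using Nat.le_induction with
    | base => rw [φ0]; exact ⟨h0nn, h0rows⟩
    | succ k hk ih =>
        rw [φrec k hk]
        exact ⟨(master k (φ k) ih.1 ih.2).2.2.1, (master k (φ k) ih.1 ih.2).2.2.2.2.1⟩
  have entφ : ∀ k, 1 ≤ k → ∀ i j, ε ≤ φ (k + 1) i j ∧ φ (k + 1) i j ≤ 1 := by
    intro k hk i j
    obtain ⟨hnn, hrows⟩ := φprops k hk
    have hlow := (master k (φ k) hnn hrows).2.2.2.1
    rw [← φrec k hk] at hlow
    have hup : φ (k + 1) i j ≤ 1 := by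
      have h1 := (φprops (k + 1) (by omega)).2 i
      have h2 : φ (k + 1) i j ≤ ∑ j', φ (k + 1) i j' :=
        Finset.single_le_sum (f := fun j' => φ (k + 1) i j')
          (fun j' _ => (φprops (k + 1) (by omega)).1 i j') (Finset.mem_univ j)
      linarith
    exact ⟨hlow i j, hup⟩
  -- the invariant for the Π products
  set Pk : ℕ → M m := PiSeq P Q R with hPk
  have hInvPi : ∀ k, Inv i0 ε (Pk k) ((1 / ε) * (1 - δ) ^ k) := by
    intro k
    induction k with
    | zero =>
        have h := Inv_base hm i0 hε (S := φ 2) (fun i j => entφ 1 le_rfl i j)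
        rw [pow_zero, mul_one, hPk]
        show Inv i0 ε (PiSeq P Q R 0) (1 / ε)
        rw [PiSeq]
        exact h
    | succ k ih =>
        have hw : 0 ≤ (1 / ε) * (1 - δ) ^ k :=
          mul_nonneg (by positivity) (pow_nonneg (by linarith) k)
        have h := Inv_step hm i0 hε hδ0 hδ1 hδm (S := φ (k + 3))
          (fun i j => entφ (k + 2) (by omega) i j) ih hw
        have heq : (1 / ε) * (1 - δ) ^ (k + 1) = (1 - δ) * ((1 / ε) * (1 - δ) ^ k) := by ring
        rw [heq, hPk]
        show Inv i0 ε (PiSeq P Q R (k + 1)) _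
        rw [PiSeq]
        exact h
  -- the representation for an arbitrary stochastic solution χ
  have general : ∀ (χ : ℕ → M m), (∀ k, (∀ i j, 0 ≤ χ k i j) ∧ ∀ i, ∑ j, χ k i j = 1) →
      (∀ k, 1 ≤ k → χ (k + 1) = (1 - R k - Q k * χ k)⁻¹ * P k) →
      ∀ k, χ (k + 2) - φ (k + 2) = NSeq Q R χ k * Pk k ∧ Mnn (NSeq Q R χ k) := by
    intro χ hχs hχr
    have hχrows : ∀ k, ∀ i, ∑ j, χ k i j ≤ 1 := fun k i => le_of_eq ((hχs k).2 i)
    have hBnn : ∀ k, 1 ≤ k → Mnn (BB Q R χ k) := by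
      intro k hk
      exact (master k (χ k) (hχs k).1 (hχrows k)).2.1
    have diff : ∀ k, 1 ≤ k →
        χ (k + 1) - φ (k + 1) = BB Q R χ k * (χ k - φ k) * φ (k + 1) := by
      intro k hk
      rw [hχr k hk, φrec k hk]
      exact diff_alg (master k (χ k) (hχs k).1 (hχrows k)).1
        (master k (φ k) (φprops k hk).1 (φprops k hk).2).1
    intro k
    induction k with
    | zero =>
        constructor
        · have h := diff 1 le_rfl
          rw [φ0, sub_zero] at h
          rw [hPk]
          show χ 2 - φ 2 = NSeq Q R χ 0 * PiSeq P Q R 0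
          rw [NSeq, PiSeq, h, Matrix.mul_assoc]
        · show Mnn (NSeq Q R χ 0)
          rw [NSeq]
          exact (hBnn 1 le_rfl).mul (hχs 1).1
    | succ k ih =>
        constructor
        · have h := diff (k + 2) (by omega)
          rw [ih.1] at h
          show χ (k + 3) - φ (k + 3) = NSeq Q R χ (k + 1) * PiSeq P Q R (k + 1)
          rw [NSeq, PiSeq]
          rw [show ((k:ℕ) + 2 + 1) = k + 3 from rfl] at h
          rw [h]
          rw [Matrix.mul_assoc, Matrix.mul_assoc, Matrix.mul_assoc]
        · show Mnn (NSeq Q R χ (k + 1))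
          rw [NSeq]
          exact (hBnn (k + 2) (by omega)).mul ih.2
  -- final assembly
  obtain ⟨k, rfl⟩ : ∃ k, n = k + 1 := ⟨n - 1, by omega⟩
  set w : ℝ := (1 / ε) * (1 - δ) ^ k with hwdef
  have hw : 0 ≤ w := mul_nonneg (by positivity) (pow_nonneg (by linarith) k)
  have hrepψ := general ψ (fun k => (hstoch k).1) hrec k
  have hrepψ' := general ψ' (fun k => (hstoch k).2) hrec' k
  have hφnn : Mnn (φ (k + 2)) := (φprops (k + 2) (by omega)).1
  have e1 := final_est hm i0 hε hw (fun i j => (hstoch (k + 2)).1.1 i j)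
    (hstoch (k + 2)).1.2 hφnn hrepψ.1 hrepψ.2 (hInvPi k)
  have e2 := final_est hm i0 hε hw (fun i j => (hstoch (k + 2)).2.1 i j)
    (hstoch (k + 2)).2.2 hφnn hrepψ'.1 hrepψ'.2 (hInvPi k)
  have hentry : ∀ i j, |(ψ (k + 1 + 1) - ψ' (k + 1 + 1)) i j| ≤ 2 * (w / ε) := by
    intro i j
    have h1 := e1 i j
    have h2 := e2 i j
    rw [Matrix.sub_apply]
    have hdec : ψ (k + 1 + 1) i j - ψ' (k + 1 + 1) i j
        = ((ψ (k + 2) i j - φ (k + 2) i j)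
            - (1 - ∑ j', φ (k + 2) i j') * (Pk k i0 j / ∑ j', Pk k i0 j'))
          - ((ψ' (k + 2) i j - φ (k + 2) i j)
            - (1 - ∑ j', φ (k + 2) i j') * (Pk k i0 j / ∑ j', Pk k i0 j')) := by
      show ψ (k + 2) i j - ψ' (k + 2) i j = _
      ring
    rw [hdec]
    calc |_ - _| ≤ _ + _ := abs_sub _ _
      _ ≤ 2 * (w / ε) := by rw [two_mul]; exact add_le_add h1 h2
  have hrow : rowNorm (ψ (k + 1 + 1) - ψ' (k + 1 + 1)) ≤ m * (2 * (w / ε)) := by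
    refine ciSup_le fun i => ?_
    calc ∑ j, |(ψ (k + 1 + 1) - ψ' (k + 1 + 1)) i j| ≤ ∑ _j : Fin m, 2 * (w / ε) :=
          Finset.sum_le_sum fun j _ => hentry i j
      _ = m * (2 * (w / ε)) := by
          rw [Finset.sum_const, Finset.card_univ, Fintype.card_fin, nsmul_eq_mul]
  refine hrow.trans ?_
  rw [hc0eq]
  have hpownn : (0:ℝ) ≤ (1 - δ) ^ k := pow_nonneg (by linarith) k
  have hstep : (1 - δ) ^ k ≤ 2 * (1 - δ) ^ (k + 1) := by
    rw [pow_succ]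
    nlinarith
  have hlhs : (m:ℝ) * (2 * (w / ε)) = (2 * m / ε ^ 2) * (1 - δ) ^ k := by
    rw [hwdef]; field_simp
  rw [hlhs]
  have hc : (0:ℝ) ≤ 2 * m / ε ^ 2 := by positivity
  calc (2 * (m:ℝ) / ε ^ 2) * (1 - δ) ^ k
      ≤ (2 * m / ε ^ 2) * (2 * (1 - δ) ^ (k + 1)) := mul_le_mul_of_nonneg_left hstep hc
    _ = 2 * (2 * m / ε ^ 2) * (1 - δ) ^ (k + 1) := by ring
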